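/- arXiv:nlin/0312012 — 2 statements merged into one kernel-verified Lean document; each statement's English description precedes it below -/
import Mathlib

section
/- The function G(q) = I_1(q) K_1(q) is strictly decreasing on (0, ∞). -/
open Real Filter Set

/-- Modified Bessel function of the first kind, order 1 (power series). -/
noncomputable def besselI1 (x : ℝ) : ℝ :=
  ∑' k : ℕ, (x / 2) ^ (2 * k + 1) / ((Nat.factorial k : ℝ) * (Nat.factorial (k + 1) : ℝ))

/-- Modified Bessel function of the second kind, order 1 (integral representation). -/
noncomputable def besselK1 (x : ℝ) : ℝ :=
  ∫ t in Set.Ioi (0 : ℝ), Real.exp (-x * Real.cosh t) * Real.cosh t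

/-- Diagonal Green's function `G(q) = I₁(q) K₁(q)`. -/
noncomputable def Gdiag (q : ℝ) : ℝ := besselI1 q * besselK1 q

/-- Green's function of the radial Helmholtz operator:
`G(r,ξ) = I₁(min(r,ξ)) K₁(max(r,ξ))`. -/
noncomputable def Grad (r ξ : ℝ) : ℝ := besselI1 (min r ξ) * besselK1 (max r ξ)

open MeasureTheory

noncomputable def besselI1' (x : ℝ) : ℝ :=
  ∑' k : ℕ, (2 * (k : ℝ) + 1) * (x / 2) ^ (2 * k) /
    (2 * ((Nat.factorial k : ℝ) * (Nat.factorial (k + 1) : ℝ)))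

noncomputable def MK (x : ℝ) : ℝ :=
  ∫ t in Set.Ioi (0 : ℝ), Real.exp (-x * Real.cosh t) * Real.cosh t ^ 2


lemma fact_one_le (k : ℕ) : (1:ℝ) ≤ (Nat.factorial k : ℝ) := by
  exact_mod_cast Nat.one_le_iff_ne_zero.2 (Nat.factorial_ne_zero _)

lemma abs_sq_pow (x : ℝ) (k : ℕ) : ((x/2)^2)^k = |x/2|^(2*k) := by
  rw [← pow_mul, ← abs_pow, abs_of_nonneg ((even_two_mul k).pow_nonneg _)]

lemma summable_norm_I1 (x : ℝ) :
    Summable (fun k : ℕ => ‖(x / 2) ^ (2 * k + 1) / ((Nat.factorial k : ℝ) * (Nat.factorial (k + 1) : ℝ))‖) := by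
  refine Summable.of_nonneg_of_le (fun k => norm_nonneg _) (fun k => ?_)
    ((Real.summable_pow_div_factorial ((x/2)^2)).mul_left |x/2|)
  rw [norm_div, norm_pow]
  have h1 : ‖x/2‖ ^ (2*k+1) = |x/2| * ((x/2)^2)^k := by
    rw [abs_sq_pow, Real.norm_eq_abs, pow_succ, mul_comm]
  rw [h1, mul_div_assoc]
  gcongr
  rw [norm_of_nonneg (by positivity)]
  nlinarith [fact_one_le k, fact_one_le (k+1)]

lemma summable_norm_I1' (x : ℝ) :
    Summable (fun k : ℕ => ‖(2 * (k : ℝ) + 1) * (x / 2) ^ (2 * k) /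
      (2 * ((Nat.factorial k : ℝ) * (Nat.factorial (k + 1) : ℝ)))‖) := by
  refine Summable.of_nonneg_of_le (fun k => norm_nonneg _) (fun k => ?_)
    (Real.summable_pow_div_factorial ((x/2)^2))
  rw [norm_div, norm_mul, norm_pow, abs_sq_pow]
  have h2 : ‖(2 * ((Nat.factorial k : ℝ) * (Nat.factorial (k + 1) : ℝ)))‖
      = 2 * ((Nat.factorial k : ℝ) * (Nat.factorial (k + 1) : ℝ)) := by
    rw [norm_of_nonneg]; positivity
  have h3 : ‖(2 * (k : ℝ) + 1)‖ = 2 * (k:ℝ) + 1 := by rw [norm_of_nonneg]; positivity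
  rw [h2, h3, Real.norm_eq_abs]
  rw [div_le_div_iff₀ (by positivity) (by positivity)]
  have hfk : ((Nat.factorial (k+1) : ℝ)) = ((k:ℝ)+1) * (Nat.factorial k : ℝ) := by
    push_cast [Nat.factorial_succ]; ring
  rw [hfk]
  have h6 := fact_one_le k
  have h7 : (0:ℝ) ≤ |x/2|^(2*k) := by positivity
  nlinarith [mul_le_mul_of_nonneg_left h6 (mul_nonneg h7 (by positivity : (0:ℝ) ≤ (Nat.factorial k : ℝ)))]

lemma hasDerivAt_I1_term (k : ℕ) (y : ℝ) :
    HasDerivAt (fun z : ℝ => (z / 2) ^ (2 * k + 1) / ((Nat.factorial k : ℝ) * (Nat.factorial (k + 1) : ℝ)))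
      ((2 * (k : ℝ) + 1) * (y / 2) ^ (2 * k) /
        (2 * ((Nat.factorial k : ℝ) * (Nat.factorial (k + 1) : ℝ)))) y := by
  have h1 : HasDerivAt (fun z : ℝ => z / 2) (1/2) y := by
    simpa using (hasDerivAt_id y).div_const 2
  have h2 := ((h1.fun_pow (2*k+1)).div_const ((Nat.factorial k : ℝ) * (Nat.factorial (k + 1) : ℝ)))
  refine h2.congr_deriv ?_
  have h3 : 2 * k + 1 - 1 = 2 * k := by omega
  rw [h3]
  push_cast
  ring

lemma hasDerivAt_besselI1 (x : ℝ) : HasDerivAt besselI1 (besselI1' x) x := by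
  set R : ℝ := |x| + 1 with hR
  have hxR : x ∈ Ioo (-R) R := by
    constructor <;> cases' abs_cases x with h h <;> simp [hR] <;> linarith [abs_nonneg x]
  have hsum : Summable (fun k : ℕ => (2 * (k : ℝ) + 1) * (R / 2) ^ (2 * k) /
      (2 * ((Nat.factorial k : ℝ) * (Nat.factorial (k + 1) : ℝ)))) := by
    apply (summable_norm_I1' R).congr
    intro k
    rw [norm_of_nonneg]
    have : (0:ℝ) ≤ R := by positivity
    positivity
  have key := hasDerivAt_of_tendstoLocallyUniformlyOn
    (l := (atTop : Filter (Finset ℕ)))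
    (f := fun (T : Finset ℕ) (y : ℝ) => ∑ k ∈ T,
      (y / 2) ^ (2 * k + 1) / ((Nat.factorial k : ℝ) * (Nat.factorial (k + 1) : ℝ)))
    (f' := fun (T : Finset ℕ) (y : ℝ) => ∑ k ∈ T,
      (2 * (k : ℝ) + 1) * (y / 2) ^ (2 * k) /
        (2 * ((Nat.factorial k : ℝ) * (Nat.factorial (k + 1) : ℝ))))
    (g := besselI1)
    (g' := fun y => besselI1' y)
    (isOpen_Ioo (a := -R) (b := R)) ?_ ?_ ?_ hxR
  · exact key
  · -- TendstoLocallyUniformlyOn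
    have := tendstoUniformlyOn_tsum (f := fun (k : ℕ) (y : ℝ) =>
      (2 * (k : ℝ) + 1) * (y / 2) ^ (2 * k) /
        (2 * ((Nat.factorial k : ℝ) * (Nat.factorial (k + 1) : ℝ)))) hsum (s := Ioo (-R) R) ?_
    · exact this.tendstoLocallyUniformlyOn.congr_right (fun y _ => rfl)
    · intro k y hy
      have hyR : |y| ≤ R := by rw [abs_le]; exact ⟨hy.1.le, hy.2.le⟩
      rw [norm_div, norm_mul, norm_pow]
      have h2 : ‖(2 * ((Nat.factorial k : ℝ) * (Nat.factorial (k + 1) : ℝ)))‖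
          = 2 * ((Nat.factorial k : ℝ) * (Nat.factorial (k + 1) : ℝ)) := by
        rw [norm_of_nonneg]; positivity
      have h3 : ‖(2 * (k : ℝ) + 1)‖ = 2 * (k:ℝ) + 1 := by rw [norm_of_nonneg]; positivity
      rw [h2, h3]
      have hb : ‖y/2‖ ≤ R/2 := by
        rw [Real.norm_eq_abs, abs_div, show |(2:ℝ)| = 2 by norm_num]
        exact div_le_div_of_nonneg_right hyR (by norm_num) |>.trans_eq rfl
      gcongr
  · filter_upwards with T y _
    exact HasDerivAt.fun_sum (fun k _ => hasDerivAt_I1_term k y)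
  · intro y _
    exact ((summable_norm_I1 y).of_norm).hasSum


lemma natIneq : ∀ i j : ℕ, i ≤ j →
    4^i * (Nat.factorial i * (Nat.factorial (i+1) * Nat.factorial (2*j+1)))
      ≤ 4^j * (Nat.factorial j * (Nat.factorial (j+1) * Nat.factorial (2*i+1))) := by
  intro i j hij
  induction j, hij using Nat.le_induction with
  | base => exact le_refl _
  | succ j hij ih =>
    have h1 : Nat.factorial (2*(j+1)+1) = (2*j+3) * ((2*j+2) * Nat.factorial (2*j+1)) := by
      rw [show 2*(j+1)+1 = (2*j+2)+1 from by omega, Nat.factorial_succ,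
        show (2*j+2) = (2*j+1)+1 from by omega, Nat.factorial_succ]
    have h2 : Nat.factorial (j+1+1) = (j+2) * Nat.factorial (j+1) := by
      rw [Nat.factorial_succ]
    have h3 : Nat.factorial (j+1) = (j+1) * Nat.factorial j := Nat.factorial_succ j
    have hle : (2*j+3) * (2*j+2) ≤ 4 * ((j+1)*(j+2)) := by nlinarith
    calc 4^i * (Nat.factorial i * (Nat.factorial (i+1) * Nat.factorial (2*(j+1)+1)))
        = (2*j+3) * ((2*j+2) * (4^i * (Nat.factorial i * (Nat.factorial (i+1) * Nat.factorial (2*j+1))))) := by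
          rw [h1]; ring
      _ ≤ (2*j+3) * ((2*j+2) * (4^j * (Nat.factorial j * (Nat.factorial (j+1) * Nat.factorial (2*i+1))))) := by
          exact Nat.mul_le_mul_left _ (Nat.mul_le_mul_left _ ih)
      _ = ((2*j+3) * (2*j+2)) * (4^j * (Nat.factorial j * (Nat.factorial (j+1) * Nat.factorial (2*i+1)))) := by
          ring
      _ ≤ (4 * ((j+1)*(j+2))) * (4^j * (Nat.factorial j * (Nat.factorial (j+1) * Nat.factorial (2*i+1)))) := by
          exact Nat.mul_le_mul_right _ hle
      _ = 4^(j+1) * (Nat.factorial (j+1) * (Nat.factorial (j+1+1) * Nat.factorial (2*i+1))) := by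
          rw [h2, h3, pow_succ]; ring

noncomputable def aco (i : ℕ) : ℝ := 1/(2^(2*i+1) * ((Nat.factorial i : ℝ) * (Nat.factorial (i+1) : ℝ)))
noncomputable def bco (j : ℕ) : ℝ := 1/((Nat.factorial (2*j+1) : ℝ))
noncomputable def Fco (x : ℝ) (p : ℕ × ℕ) : ℝ :=
  (2*(p.2:ℝ) - 2*(p.1:ℝ)) * (aco p.1 * bco p.2) * x^(2*(p.1+p.2)+1)

lemma coefIneq {i j : ℕ} (hij : i ≤ j) : aco j * bco i ≤ aco i * bco j := by
  rw [aco, aco, bco, bco, div_mul_div_comm, div_mul_div_comm, one_mul]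
  apply one_div_le_one_div_of_le
  · positivity
  · have h := natIneq i j hij
    have h' : ((4^i * (Nat.factorial i * (Nat.factorial (i+1) * Nat.factorial (2*j+1))) : ℕ) : ℝ)
        ≤ ((4^j * (Nat.factorial j * (Nat.factorial (j+1) * Nat.factorial (2*i+1))) : ℕ) : ℝ) :=
      Nat.cast_le.2 h
    push_cast at h'
    have e4 : ∀ m : ℕ, ((2:ℝ))^(2*m+1) = 2 * 4^m := by
      intro m
      rw [pow_succ, pow_mul]
      norm_num [mul_comm]
    rw [e4, e4]
    nlinarith


lemma summable_norm_coshterm (x : ℝ) : Summable (fun n : ℕ => ‖x ^ (2*n) / ((Nat.factorial (2*n) : ℝ))‖) := by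
  apply ((Real.hasSum_cosh |x|).summable).congr
  intro n
  rw [norm_div, norm_pow, Real.norm_eq_abs, Real.norm_eq_abs,
    abs_of_nonneg (by positivity : (0:ℝ) ≤ (Nat.factorial (2*n):ℝ))]

lemma summable_norm_sinhterm (x : ℝ) : Summable (fun n : ℕ => ‖x ^ (2*n+1) / ((Nat.factorial (2*n+1) : ℝ))‖) := by
  apply ((Real.hasSum_sinh |x|).summable).congr
  intro n
  rw [norm_div, norm_pow, Real.norm_eq_abs, Real.norm_eq_abs,
    abs_of_nonneg (by positivity : (0:ℝ) ≤ (Nat.factorial (2*n+1):ℝ))]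

lemma Fco_eq (x : ℝ) (p : ℕ × ℕ) :
    (x / 2) ^ (2 * p.1 + 1) / ((Nat.factorial p.1 : ℝ) * (Nat.factorial (p.1 + 1) : ℝ))
        * (x ^ (2*p.2) / ((Nat.factorial (2*p.2) : ℝ)))
      - (2 * (p.1 : ℝ) + 1) * (x / 2) ^ (2 * p.1) /
          (2 * ((Nat.factorial p.1 : ℝ) * (Nat.factorial (p.1 + 1) : ℝ)))
        * (x ^ (2*p.2+1) / ((Nat.factorial (2*p.2+1) : ℝ)))
      = Fco x p := by
  obtain ⟨i, j⟩ := p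
  simp only [Fco, aco, bco]
  have hfact : ((Nat.factorial (2*j+1)) : ℝ) = (2*(j:ℝ)+1) * (Nat.factorial (2*j) : ℝ) := by
    rw [show 2*j+1 = (2*j)+1 from rfl, Nat.factorial_succ]
    push_cast
    ring
  have hx1 : (x/2) ^ (2*i+1) = x^(2*i+1)/2^(2*i+1) := div_pow x 2 _
  have hx2 : (x/2) ^ (2*i) = x^(2*i)/2^(2*i) := div_pow x 2 _
  rw [hfact, hx1, hx2]
  have f1 : (Nat.factorial i : ℝ) ≠ 0 := by positivity
  have f2 : (Nat.factorial (i+1) : ℝ) ≠ 0 := by positivity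
  have f3 : (Nat.factorial (2*j) : ℝ) ≠ 0 := by positivity
  have f4 : (2*(j:ℝ)+1) ≠ 0 := by positivity
  field_simp
  ring

set_option maxHeartbeats 2000000 in
private lemma mul_nonneg_of_nonpos_nonpos {a b : ℝ} (ha : a ≤ 0) (hb : b ≤ 0) : 0 ≤ a * b := by nlinarith

set_option maxHeartbeats 2000000 in
lemma keyA {x : ℝ} (hx : 0 < x) : besselI1' x * Real.sinh x < besselI1 x * Real.cosh x := by
  -- product expansions
  have hsum1 := summable_norm_I1 x
  have hsum2 := summable_norm_coshterm x
  have hsum3 := summable_norm_I1' x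
  have hsum4 := summable_norm_sinhterm x
  have hprod1 : besselI1 x * Real.cosh x
      = ∑' (p : ℕ × ℕ), (x / 2) ^ (2 * p.1 + 1) / ((Nat.factorial p.1 : ℝ) * (Nat.factorial (p.1 + 1) : ℝ))
          * (x ^ (2*p.2) / ((Nat.factorial (2*p.2) : ℝ))) := by
    rw [besselI1, Real.cosh_eq_tsum]
    exact tsum_mul_tsum_of_summable_norm hsum1 hsum2
  have hprod2 : besselI1' x * Real.sinh x
      = ∑' (p : ℕ × ℕ), (2 * (p.1 : ℝ) + 1) * (x / 2) ^ (2 * p.1) /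
          (2 * ((Nat.factorial p.1 : ℝ) * (Nat.factorial (p.1 + 1) : ℝ)))
          * (x ^ (2*p.2+1) / ((Nat.factorial (2*p.2+1) : ℝ))) := by
    rw [besselI1', Real.sinh_eq_tsum]
    exact tsum_mul_tsum_of_summable_norm hsum3 hsum4
  have hsumA : Summable (fun p : ℕ × ℕ =>
      (x / 2) ^ (2 * p.1 + 1) / ((Nat.factorial p.1 : ℝ) * (Nat.factorial (p.1 + 1) : ℝ))
        * (x ^ (2*p.2) / ((Nat.factorial (2*p.2) : ℝ)))) :=
    summable_mul_of_summable_norm hsum1 hsum2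
  have hsumB : Summable (fun p : ℕ × ℕ =>
      (2 * (p.1 : ℝ) + 1) * (x / 2) ^ (2 * p.1) /
        (2 * ((Nat.factorial p.1 : ℝ) * (Nat.factorial (p.1 + 1) : ℝ)))
        * (x ^ (2*p.2+1) / ((Nat.factorial (2*p.2+1) : ℝ)))) :=
    summable_mul_of_summable_norm hsum3 hsum4
  have hsumF : Summable (Fco x) := by
    apply (hsumA.sub hsumB).congr
    intro p
    exact Fco_eq x p
  have hdiff : besselI1 x * Real.cosh x - besselI1' x * Real.sinh x = ∑' p, Fco x p := by
    rw [hprod1, hprod2, ← Summable.tsum_sub hsumA hsumB]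
    exact tsum_congr (fun p => Fco_eq x p)
  -- symmetrization
  have hsumFswap : Summable (fun p : ℕ × ℕ => Fco x p.swap) :=
    (Equiv.prodComm ℕ ℕ).summable_iff.2 hsumF
  have hswap : ∑' (p : ℕ × ℕ), Fco x p.swap = ∑' p, Fco x p := by
    exact (Equiv.prodComm ℕ ℕ).tsum_eq (Fco x)
  have htwo : (2:ℝ) * (∑' p, Fco x p) = ∑' (p : ℕ × ℕ), (Fco x p + Fco x p.swap) := by
    rw [Summable.tsum_add hsumF hsumFswap, hswap]
    ring
  -- nonnegativity of symmetrized terms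
  have hfact : ∀ (i j : ℕ), Fco x (i,j) + Fco x (j,i)
      = (2*(j:ℝ) - 2*(i:ℝ)) * (aco i * bco j - aco j * bco i) * x^(2*(i+j)+1) := by
    intro i j
    simp only [Fco]
    have : 2*(j+i) = 2*(i+j) := by ring
    rw [this]
    ring
  have hnonneg : ∀ p : ℕ × ℕ, 0 ≤ Fco x p + Fco x p.swap := by
    rintro ⟨i, j⟩
    have hxp : (0:ℝ) < x^(2*(i+j)+1) := by positivity
    rw [show (Prod.swap (i,j)) = (j,i) from rfl, hfact i j]
    rcases le_total i j with h | h
    · apply mul_nonneg (mul_nonneg ?_ ?_) hxp.le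
      · have : (i:ℝ) ≤ (j:ℝ) := Nat.cast_le.2 h
        linarith
      · linarith [coefIneq h]
    · refine mul_nonneg ?_ hxp.le
      have h1 : (2*(j:ℝ) - 2*(i:ℝ)) ≤ 0 := by
        have : (j:ℝ) ≤ (i:ℝ) := Nat.cast_le.2 h
        linarith
      have h2 : (aco i * bco j - aco j * bco i) ≤ 0 := by linarith [coefIneq h]
      exact mul_nonneg_of_nonpos_nonpos h1 h2
  -- lower bound by the (0,1) term
  have hval : Fco x ((0:ℕ),(1:ℕ)) + Fco x ((1:ℕ),(0:ℕ)) = x^3/24 := by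
    simp only [Fco, aco, bco]
    norm_num [Nat.factorial]
    ring
  have hlb : x^3/24 ≤ ∑' (p : ℕ × ℕ), (Fco x p + Fco x p.swap) := by
    rw [← hval]
    apply Summable.le_tsum (hsumF.add hsumFswap) ((0:ℕ),(1:ℕ))
    intro p hp
    exact hnonneg p
  have hD : x^3/48 ≤ besselI1 x * Real.cosh x - besselI1' x * Real.sinh x := by
    rw [hdiff]
    linarith [htwo, hlb]
  nlinarith [hD, pow_pos hx 3]


lemma cosh_lower (t : ℝ) : (1 + t)/2 ≤ Real.cosh t := by
  rw [Real.cosh_eq]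
  have h1 := Real.add_one_le_exp t
  have h2 := Real.exp_nonneg (-t)
  linarith

lemma pow_div_factorial_le_exp {y : ℝ} (hy : 0 ≤ y) (n : ℕ) : y^n / (Nat.factorial n : ℝ) ≤ Real.exp y := by
  have h := Real.sum_le_exp_of_nonneg hy (n+1)
  refine le_trans ?_ h
  have : y^n / (Nat.factorial n : ℝ) = ∑ i ∈ Finset.range (n+1), if i = n then y^i / (Nat.factorial i : ℝ) else 0 := by
    rw [Finset.sum_ite_eq' (Finset.range (n+1)) n]
    simp
  rw [this]
  apply Finset.sum_le_sum
  intro i hi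
  split
  · exact le_refl _
  · positivity

lemma cosh_pow_exp_bound {a : ℝ} (ha : 0 < a) (n : ℕ) (t : ℝ) :
    Real.cosh t ^ n * Real.exp (-a * Real.cosh t)
      ≤ (Nat.factorial n : ℝ) * (2/a)^n * Real.exp (-(a/4) * t) := by
  set c := Real.cosh t with hc
  have hc1 : 1 ≤ c := Real.one_le_cosh t
  have hc0 : 0 < c := lt_of_lt_of_le one_pos hc1
  -- c^n ≤ n! (2/a)^n exp(a/2 * c)
  have h1 : (a/2*c)^n / (Nat.factorial n : ℝ) ≤ Real.exp (a/2*c) :=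
    pow_div_factorial_le_exp (by positivity) n
  have h2 : c^n ≤ (Nat.factorial n : ℝ) * (2/a)^n * Real.exp (a/2*c) := by
    have e : c^n = (a/2*c)^n * (2/a)^n := by
      rw [← mul_pow]
      congr 1
      field_simp
    rw [e]
    calc (a/2*c)^n * (2/a)^n ≤ ((Nat.factorial n : ℝ) * Real.exp (a/2*c)) * (2/a)^n := by
          have := (div_le_iff₀ (by positivity : (0:ℝ) < (Nat.factorial n : ℝ))).1 h1
          gcongr
          linarith [this]
      _ = (Nat.factorial n : ℝ) * (2/a)^n * Real.exp (a/2*c) := by ring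
  have h3 : Real.exp (-a*c) = Real.exp (-(a/2)*c) * Real.exp (-(a/2)*c) := by
    rw [← Real.exp_add]; ring_nf
  have hh : Real.exp (-(a/2)*c) ≤ Real.exp (-(a/4) * t) := by
    rw [Real.exp_le_exp]
    nlinarith [cosh_lower t]
  have hnn : (0:ℝ) ≤ (Nat.factorial n : ℝ) * (2/a)^n := by positivity
  calc c^n * Real.exp (-a*c)
      ≤ ((Nat.factorial n : ℝ) * (2/a)^n * Real.exp (a/2*c)) * Real.exp (-a*c) :=
        mul_le_mul_of_nonneg_right h2 (Real.exp_nonneg _)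
    _ = (Nat.factorial n : ℝ) * (2/a)^n * (Real.exp (a/2*c) * Real.exp (-a*c)) := by ring
    _ = (Nat.factorial n : ℝ) * (2/a)^n * Real.exp (-(a/2)*c) := by
        rw [← Real.exp_add]
        congr 2
        ring
    _ ≤ (Nat.factorial n : ℝ) * (2/a)^n * Real.exp (-(a/4) * t) :=
        mul_le_mul_of_nonneg_left hh hnn

lemma integrable_cosh_pow_exp {a : ℝ} (ha : 0 < a) (n : ℕ) :
    IntegrableOn (fun t => Real.exp (-a * Real.cosh t) * Real.cosh t ^ n) (Ioi (0:ℝ)) := by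
  have hcont : Continuous (fun t => Real.exp (-a * Real.cosh t) * Real.cosh t ^ n) := by
    continuity
  apply Integrable.mono' (g := fun t => (Nat.factorial n : ℝ) * (2/a)^n * Real.exp (-(a/4) * t))
  · exact ((exp_neg_integrableOn_Ioi 0 (by positivity : (0:ℝ) < a/4)).const_mul _)
  · exact hcont.aestronglyMeasurable
  · filter_upwards with t
    rw [Real.norm_eq_abs, abs_of_nonneg (by positivity)]
    rw [mul_comm]
    exact cosh_pow_exp_bound ha n t

lemma hasDerivAt_besselK1 {x : ℝ} (hx : 0 < x) : HasDerivAt besselK1 (-MK x) x := by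
  have hmain := hasDerivAt_integral_of_dominated_loc_of_deriv_le
    (F := fun (x' : ℝ) (t : ℝ) => Real.exp (-x' * Real.cosh t) * Real.cosh t)
    (F' := fun (x' : ℝ) (t : ℝ) => -(Real.exp (-x' * Real.cosh t) * Real.cosh t ^ 2))
    (x₀ := x)
    (bound := fun t => Real.exp (-(x/2) * Real.cosh t) * Real.cosh t ^ 2)
    (μ := volume.restrict (Ioi (0:ℝ)))
    (Metric.ball_mem_nhds x (half_pos hx)) ?_ ?_ ?_ ?_ ?_ ?_
  · obtain ⟨-, h⟩ := hmain
    have : (∫ t in Ioi (0:ℝ), -(Real.exp (-x * Real.cosh t) * Real.cosh t ^ 2)) = -MK x := by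
      rw [integral_neg, MK]
    rwa [this] at h
  · filter_upwards with x'
    exact (Continuous.aestronglyMeasurable (by continuity))
  · exact (integrable_cosh_pow_exp hx 1).congr (by filter_upwards with t; simp)
  · exact (Continuous.aestronglyMeasurable (by continuity))
  · filter_upwards with t
    intro x' hx'
    rw [Metric.mem_ball, Real.dist_eq, abs_lt] at hx'
    have hx2 : x/2 ≤ x' := by linarith
    rw [norm_neg, Real.norm_eq_abs, abs_of_nonneg (by positivity)]
    have hc : (0:ℝ) < Real.cosh t := Real.cosh_pos t
    have : Real.exp (-x' * Real.cosh t) ≤ Real.exp (-(x/2) * Real.cosh t) := by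
      rw [Real.exp_le_exp]
      nlinarith
    nlinarith [sq_nonneg (Real.cosh t), this, Real.exp_nonneg (-x' * Real.cosh t)]
  · exact integrable_cosh_pow_exp (half_pos hx) 2
  · filter_upwards with t
    intro x' hx'
    have h1 : HasDerivAt (fun y : ℝ => -y * Real.cosh t) (-Real.cosh t) x' := by
      simpa using ((hasDerivAt_id x').neg.mul_const (Real.cosh t))
    have h2 := (h1.exp).mul_const (Real.cosh t)
    refine h2.congr_deriv ?_
    ring

lemma besselK1_pos {x : ℝ} (hx : 0 < x) : 0 < besselK1 x := by
  rw [besselK1]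
  have hint : IntegrableOn (fun t => Real.exp (-x * Real.cosh t) * Real.cosh t) (Ioi (0:ℝ)) :=
    (integrable_cosh_pow_exp hx 1).congr (by filter_upwards with t; simp)
  rw [setIntegral_pos_iff_support_of_nonneg_ae ?_ hint]
  · have : (Function.support fun t => Real.exp (-x * Real.cosh t) * Real.cosh t) = univ := by
      ext t
      simp only [Function.mem_support, mem_univ, iff_true]
      positivity
    rw [this, univ_inter, Real.volume_Ioi]
    norm_num
  · filter_upwards with t
    positivity


lemma exp_tail {x : ℝ} (hx : 0 < x) (a : ℝ) :
    ∫ σ in Ioi a, x * Real.exp (-x*σ) = Real.exp (-x*a) := by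
  rw [integral_const_mul]
  have h1 : ∫ σ in Ioi a, Real.exp (-x*σ) = ∫ σ in Ioi a, (fun u => Real.exp (-u)) (x * σ) := by
    congr 1
    ext σ
    ring_nf
  rw [h1, integral_comp_mul_left_Ioi (fun u => Real.exp (-u)) a hx, integral_exp_neg_Ioi]
  rw [smul_eq_mul]
  rw [← mul_assoc, mul_inv_cancel₀ (ne_of_gt hx), one_mul]
  ring_nf

lemma cosh_arsinh_sqrt {w : ℝ} (hw : 1 ≤ w) :
    Real.cosh (Real.arsinh (Real.sqrt (w^2 - 1))) = w := by
  rw [Real.cosh_arsinh, Real.sq_sqrt (by nlinarith : (0:ℝ) ≤ w^2 - 1)]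
  rw [show 1 + (w^2 - 1) = w^2 from by ring, Real.sqrt_sq (by linarith)]

lemma set_eq {w : ℝ} (hw : 1 ≤ w) :
    {t : ℝ | Real.cosh t < w} ∩ Ioi 0 = Ioo 0 (Real.arsinh (Real.sqrt (w^2 - 1))) := by
  set v := Real.arsinh (Real.sqrt (w^2 - 1)) with hv
  have hvnn : 0 ≤ v := Real.arsinh_nonneg_iff.2 (Real.sqrt_nonneg _)
  have hcv : Real.cosh v = w := cosh_arsinh_sqrt hw
  ext t
  simp only [mem_inter_iff, mem_setOf_eq, mem_Ioi, mem_Ioo]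
  constructor
  · rintro ⟨h1, h2⟩
    refine ⟨h2, ?_⟩
    have : Real.cosh t < Real.cosh v := by rw [hcv]; exact h1
    rw [Real.cosh_lt_cosh] at this
    calc t = |t| := (abs_of_pos h2).symm
      _ < |v| := this
      _ = v := abs_of_nonneg hvnn
  · rintro ⟨h1, h2⟩
    refine ⟨?_, h1⟩
    rw [← hcv, Real.cosh_lt_cosh, abs_of_pos h1, abs_of_nonneg hvnn]
    exact h2

lemma hasDerivAt_phi_m (t : ℝ) :
    HasDerivAt (fun T : ℝ => T/2 + Real.sinh T * Real.cosh T/2 - Real.sinh T)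
      (Real.cosh t * (Real.cosh t - 1)) t := by
  have h := (((hasDerivAt_id t).div_const 2).add
    (((Real.hasDerivAt_sinh t).mul (Real.hasDerivAt_cosh t)).div_const 2)).sub
    (Real.hasDerivAt_sinh t)
  refine h.congr_deriv ?_
  have h2 : Real.sinh t * Real.sinh t = Real.cosh t * Real.cosh t - 1 := by
    have := Real.sinh_sq t
    nlinarith
  nlinarith [h2]

lemma hasDerivAt_phi_p (t : ℝ) :
    HasDerivAt (fun T : ℝ => T/2 + Real.sinh T * Real.cosh T/2 + Real.sinh T)
      (Real.cosh t * (Real.cosh t + 1)) t := by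
  have h := (((hasDerivAt_id t).div_const 2).add
    (((Real.hasDerivAt_sinh t).mul (Real.hasDerivAt_cosh t)).div_const 2)).add
    (Real.hasDerivAt_sinh t)
  refine h.congr_deriv ?_
  have h2 : Real.sinh t * Real.sinh t = Real.cosh t * Real.cosh t - 1 := by
    have := Real.sinh_sq t
    nlinarith
  nlinarith [h2]

lemma integral_Ioo_m {v : ℝ} (hv : 0 ≤ v) :
    ∫ t in Ioo (0:ℝ) v, Real.cosh t * (Real.cosh t - 1)
      = v/2 + Real.sinh v * Real.cosh v/2 - Real.sinh v := by
  rw [← MeasureTheory.integral_Ioc_eq_integral_Ioo, ← intervalIntegral.integral_of_le hv]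
  rw [intervalIntegral.integral_eq_sub_of_hasDerivAt (fun t _ => hasDerivAt_phi_m t)
    (Continuous.intervalIntegrable (by continuity) _ _)]
  simp [Real.sinh_zero]

lemma integral_Ioo_p {v : ℝ} (hv : 0 ≤ v) :
    ∫ t in Ioo (0:ℝ) v, Real.cosh t * (Real.cosh t + 1)
      = v/2 + Real.sinh v * Real.cosh v/2 + Real.sinh v := by
  rw [← MeasureTheory.integral_Ioc_eq_integral_Ioo, ← intervalIntegral.integral_of_le hv]
  rw [intervalIntegral.integral_eq_sub_of_hasDerivAt (fun t _ => hasDerivAt_phi_p t)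
    (Continuous.intervalIntegrable (by continuity) _ _)]
  simp [Real.sinh_zero]

lemma final_real {σ : ℝ} (hσ : 2 < σ) :
    let u := Real.arsinh (Real.sqrt ((σ-1)^2 - 1))
    let v := Real.arsinh (Real.sqrt ((σ+1)^2 - 1))
    u/2 + Real.sinh u * Real.cosh u/2 + Real.sinh u
      ≤ v/2 + Real.sinh v * Real.cosh v/2 - Real.sinh v := by
  intro u v
  set q := Real.sqrt ((σ-1)^2 - 1) with hq
  set p := Real.sqrt ((σ+1)^2 - 1) with hp
  have hsq : Real.sinh u = q := Real.sinh_arsinh _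
  have hsp : Real.sinh v = p := Real.sinh_arsinh _
  have hcq : Real.cosh u = σ - 1 := cosh_arsinh_sqrt (by linarith)
  have hcp : Real.cosh v = σ + 1 := cosh_arsinh_sqrt (by linarith)
  have hq2 : q^2 = (σ-1)^2 - 1 := Real.sq_sqrt (by nlinarith)
  have hp2 : p^2 = (σ+1)^2 - 1 := Real.sq_sqrt (by nlinarith)
  have hqn : 0 ≤ q := Real.sqrt_nonneg _
  have hpn : 0 ≤ p := Real.sqrt_nonneg _
  have huv : u ≤ v := by
    apply Real.arsinh_le_arsinh.2
    apply Real.sqrt_le_sqrt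
    nlinarith
  have h2 : q*(σ+1) ≤ p*(σ-1) := by
    have e1 : q*(σ+1) = Real.sqrt ((q*(σ+1))^2) := (Real.sqrt_sq (by positivity)).symm
    have e2 : Real.sqrt ((p*(σ-1))^2) = p*(σ-1) := Real.sqrt_sq (by
      apply mul_nonneg hpn; linarith)
    rw [e1, ← e2]
    apply Real.sqrt_le_sqrt
    nlinarith
  rw [hsq, hsp, hcq, hcp]
  nlinarith [huv, h2]

lemma lint_repr {x : ℝ} (hx : 0 < x) {g h : ℝ → ℝ} (hg : Continuous g) (hh : Continuous h)
    (hg0 : ∀ t, 0 ≤ g t) (hh0 : ∀ t, 0 ≤ h t) :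
    ∫⁻ t in Ioi (0:ℝ), ENNReal.ofReal (g t * Real.exp (-x * h t))
      = ∫⁻ σ in Ioi (0:ℝ),
          (∫⁻ t in ({t : ℝ | h t < σ} ∩ Ioi 0), ENNReal.ofReal (g t))
            * ENNReal.ofReal (x * Real.exp (-x*σ)) := by
  have hexp_meas : Measurable fun σ : ℝ => ENNReal.ofReal (x * Real.exp (-x*σ)) :=
    (by continuity : Continuous fun σ : ℝ => x * Real.exp (-x*σ)).measurable.ennreal_ofReal
  -- step 1 : pointwise identity in t
  have step1 : ∀ t : ℝ, ENNReal.ofReal (g t * Real.exp (-x * h t))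
      = ∫⁻ σ in Ioi (0:ℝ),
          (Ioi (h t)).indicator (fun σ' => ENNReal.ofReal (g t) * ENNReal.ofReal (x * Real.exp (-x*σ'))) σ := by
    intro t
    rw [lintegral_indicator measurableSet_Ioi, Measure.restrict_restrict measurableSet_Ioi,
      inter_eq_self_of_subset_left (Ioi_subset_Ioi (hh0 t)),
      lintegral_const_mul _ hexp_meas]
    have hint : IntegrableOn (fun σ => x * Real.exp (-x*σ)) (Ioi (h t)) :=
      (exp_neg_integrableOn_Ioi _ hx).const_mul x
    rw [← ofReal_integral_eq_lintegral_ofReal hint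
      (by filter_upwards with σ; positivity)]
    rw [exp_tail hx (h t), ← ENNReal.ofReal_mul (hg0 t)]
  -- rewrite LHS
  rw [lintegral_congr (fun t => step1 t)]
  -- swap
  have hmeas : Measurable (Function.uncurry fun (t σ : ℝ) =>
      (Ioi (h t)).indicator (fun σ' => ENNReal.ofReal (g t) * ENNReal.ofReal (x * Real.exp (-x*σ'))) σ) := by
    have heq : (Function.uncurry fun (t σ : ℝ) =>
        (Ioi (h t)).indicator (fun σ' => ENNReal.ofReal (g t) * ENNReal.ofReal (x * Real.exp (-x*σ'))) σ)
        = fun p : ℝ × ℝ => ({q : ℝ × ℝ | h q.1 < q.2}).indicator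
            (fun q => ENNReal.ofReal (g q.1) * ENNReal.ofReal (x * Real.exp (-x*q.2))) p := by
      ext p
      by_cases hp : h p.1 < p.2
      · simp [Function.uncurry, Set.indicator, mem_Ioi, hp]
      · simp [Function.uncurry, Set.indicator, mem_Ioi, hp]
    rw [heq]
    exact Measurable.indicator
      (((hg.comp continuous_fst).measurable.ennreal_ofReal).mul
        ((by continuity : Continuous fun q : ℝ × ℝ => x * Real.exp (-x*q.2)).measurable.ennreal_ofReal))
      (measurableSet_lt (hh.comp continuous_fst).measurable continuous_snd.measurable)
  rw [lintegral_lintegral_swap hmeas.aemeasurable]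
  -- inner integral for fixed σ
  apply lintegral_congr
  intro σ
  have inner_eq : ∀ t : ℝ,
      (Ioi (h t)).indicator (fun σ' => ENNReal.ofReal (g t) * ENNReal.ofReal (x * Real.exp (-x*σ'))) σ
      = ({t : ℝ | h t < σ}).indicator (fun t' => ENNReal.ofReal (g t') * ENNReal.ofReal (x * Real.exp (-x*σ))) t := by
    intro t
    by_cases hp : h t < σ
    · simp [Set.indicator, mem_Ioi, hp]
    · simp [Set.indicator, mem_Ioi, hp]
  rw [lintegral_congr (fun t => inner_eq t)]
  rw [lintegral_indicator (measurableSet_lt hh.measurable measurable_const),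
    Measure.restrict_restrict (measurableSet_lt hh.measurable measurable_const),
    lintegral_mul_const _ (hg.measurable.ennreal_ofReal)]

noncomputable def fA (x t : ℝ) : ℝ :=
  Real.cosh t * (Real.cosh t - 1) * Real.exp (-x * (Real.cosh t - 1))
noncomputable def fB (x t : ℝ) : ℝ :=
  Real.cosh t * (Real.cosh t + 1) * Real.exp (-x * (Real.cosh t + 1))

lemma fA_nonneg (x t : ℝ) : 0 ≤ fA x t := by
  have h := Real.one_le_cosh t
  rw [fA]
  apply mul_nonneg (mul_nonneg (Real.cosh_pos t).le (by linarith)) (Real.exp_nonneg _)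

lemma fB_nonneg (x t : ℝ) : 0 ≤ fB x t := by
  have := Real.cosh_pos t
  rw [fB]
  positivity

lemma fA_integrable {x : ℝ} (hx : 0 < x) : IntegrableOn (fA x) (Ioi (0:ℝ)) := by
  apply ((((integrable_cosh_pow_exp hx 2)).const_mul (Real.exp x)).sub
    ((((integrable_cosh_pow_exp hx 1)).const_mul (Real.exp x)))).congr
  filter_upwards with t
  simp only [Pi.sub_apply, fA]
  rw [show -x * (Real.cosh t - 1) = -x * Real.cosh t + x from by ring, Real.exp_add]
  ring

lemma fB_integrable {x : ℝ} (hx : 0 < x) : IntegrableOn (fB x) (Ioi (0:ℝ)) := by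
  apply ((((integrable_cosh_pow_exp hx 2)).const_mul (Real.exp (-x))).add
    ((((integrable_cosh_pow_exp hx 1)).const_mul (Real.exp (-x))))).congr
  filter_upwards with t
  simp only [Pi.add_apply, fB]
  rw [show -x * (Real.cosh t + 1) = -x * Real.cosh t + -x from by ring, Real.exp_add]
  ring

lemma repA {x : ℝ} (hx : 0 < x) :
    ∫⁻ t in Ioi (0:ℝ), ENNReal.ofReal (fA x t)
      = ∫⁻ σ in Ioi (0:ℝ),
          (∫⁻ t in ({t : ℝ | Real.cosh t - 1 < σ} ∩ Ioi 0),
            ENNReal.ofReal (Real.cosh t * (Real.cosh t - 1)))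
            * ENNReal.ofReal (x * Real.exp (-x*σ)) := by
  exact lint_repr hx (g := fun t => Real.cosh t * (Real.cosh t - 1))
    (h := fun t => Real.cosh t - 1) (by continuity) (by continuity)
    (fun t => mul_nonneg (Real.cosh_pos t).le (by linarith [Real.one_le_cosh t]))
    (fun t => by have := Real.one_le_cosh t; show (0:ℝ) ≤ Real.cosh t - 1; linarith)

lemma repB {x : ℝ} (hx : 0 < x) :
    ∫⁻ t in Ioi (0:ℝ), ENNReal.ofReal (fB x t)
      = ∫⁻ σ in Ioi (0:ℝ),
          (∫⁻ t in ({t : ℝ | Real.cosh t + 1 < σ} ∩ Ioi 0),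
            ENNReal.ofReal (Real.cosh t * (Real.cosh t + 1)))
            * ENNReal.ofReal (x * Real.exp (-x*σ)) := by
  exact lint_repr hx (g := fun t => Real.cosh t * (Real.cosh t + 1))
    (h := fun t => Real.cosh t + 1) (by continuity) (by continuity)
    (fun t => by have := Real.cosh_pos t; show (0:ℝ) ≤ Real.cosh t * (Real.cosh t + 1); positivity)
    (fun t => by have := Real.cosh_pos t; show (0:ℝ) ≤ Real.cosh t + 1; linarith)

set_option maxHeartbeats 1000000 in
lemma coreAB {x : ℝ} (hx : 0 < x) :
    ∫ t in Ioi (0:ℝ), fB x t ≤ ∫ t in Ioi (0:ℝ), fA x t := by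
  rw [← ENNReal.ofReal_le_ofReal_iff (setIntegral_nonneg measurableSet_Ioi (fun t _ => fA_nonneg x t))]
  rw [ofReal_integral_eq_lintegral_ofReal (fB_integrable hx) (by filter_upwards with t; exact fB_nonneg x t),
      ofReal_integral_eq_lintegral_ofReal (fA_integrable hx) (by filter_upwards with t; exact fA_nonneg x t)]
  rw [repA hx, repB hx]
  apply lintegral_mono_ae
  filter_upwards [ae_restrict_mem measurableSet_Ioi] with σ hσ
  apply mul_le_mul_left
  rcases le_or_gt σ 2 with hσ2 | hσ2
  · have hempty : {t : ℝ | Real.cosh t + 1 < σ} ∩ Ioi 0 = (∅ : Set ℝ) := by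
      ext t
      simp only [mem_inter_iff, mem_setOf_eq, mem_Ioi, mem_empty_iff_false, iff_false, not_and]
      intro hlt
      exfalso
      have := Real.one_le_cosh t
      linarith
    rw [hempty, Measure.restrict_empty, lintegral_zero_measure]
    exact zero_le
  · have hsetB : {t : ℝ | Real.cosh t + 1 < σ} ∩ Ioi 0
        = Ioo 0 (Real.arsinh (Real.sqrt ((σ-1)^2 - 1))) := by
      have he : {t : ℝ | Real.cosh t + 1 < σ} = {t : ℝ | Real.cosh t < σ - 1} := by
        ext t; simp only [mem_setOf_eq]; constructor <;> intro <;> linarith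
      rw [he, set_eq (by linarith : (1:ℝ) ≤ σ - 1)]
    have hsetA : {t : ℝ | Real.cosh t - 1 < σ} ∩ Ioi 0
        = Ioo 0 (Real.arsinh (Real.sqrt ((σ+1)^2 - 1))) := by
      have he : {t : ℝ | Real.cosh t - 1 < σ} = {t : ℝ | Real.cosh t < σ + 1} := by
        ext t; simp only [mem_setOf_eq]; constructor <;> intro <;> linarith
      rw [he, set_eq (by linarith : (1:ℝ) ≤ σ + 1)]
    rw [hsetA, hsetB]
    set u := Real.arsinh (Real.sqrt ((σ-1)^2 - 1)) with hu
    set v := Real.arsinh (Real.sqrt ((σ+1)^2 - 1)) with hv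
    have hun : 0 ≤ u := Real.arsinh_nonneg_iff.2 (Real.sqrt_nonneg _)
    have hvn : 0 ≤ v := Real.arsinh_nonneg_iff.2 (Real.sqrt_nonneg _)
    have hevalB : ∫⁻ t in Ioo (0:ℝ) u, ENNReal.ofReal (Real.cosh t * (Real.cosh t + 1))
        = ENNReal.ofReal (u/2 + Real.sinh u * Real.cosh u/2 + Real.sinh u) := by
      rw [← ofReal_integral_eq_lintegral_ofReal
        (((by continuity : Continuous fun t => Real.cosh t * (Real.cosh t + 1)).integrableOn_Icc).mono_set
          Ioo_subset_Icc_self)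
        (by filter_upwards with t; have := Real.cosh_pos t; positivity)]
      rw [integral_Ioo_p hun]
    have hevalA : ∫⁻ t in Ioo (0:ℝ) v, ENNReal.ofReal (Real.cosh t * (Real.cosh t - 1))
        = ENNReal.ofReal (v/2 + Real.sinh v * Real.cosh v/2 - Real.sinh v) := by
      rw [← ofReal_integral_eq_lintegral_ofReal
        (((by continuity : Continuous fun t => Real.cosh t * (Real.cosh t - 1)).integrableOn_Icc).mono_set
          Ioo_subset_Icc_self)
        (by filter_upwards with t using mul_nonneg (Real.cosh_pos t).le (by linarith [Real.one_le_cosh t]))]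
      rw [integral_Ioo_m hvn]
    rw [hevalA, hevalB]
    exact ENNReal.ofReal_le_ofReal (final_real hσ2)

set_option maxHeartbeats 1000000 in
lemma keyB {x : ℝ} (hx : 0 < x) : besselK1 x * Real.cosh x ≤ MK x * Real.sinh x := by
  have hMK2 : IntegrableOn (fun t => Real.exp (-x * Real.cosh t) * Real.cosh t ^ 2) (Ioi (0:ℝ)) :=
    integrable_cosh_pow_exp hx 2
  have hK1 : IntegrableOn (fun t => Real.exp (-x * Real.cosh t) * Real.cosh t) (Ioi (0:ℝ)) :=
    (integrable_cosh_pow_exp hx 1).congr (by filter_upwards with t; simp)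
  have hident : MK x * Real.sinh x - besselK1 x * Real.cosh x
      = (1/2) * ((∫ t in Ioi (0:ℝ), fA x t) - ∫ t in Ioi (0:ℝ), fB x t) := by
    rw [MK, besselK1, ← integral_mul_const, ← integral_mul_const,
      ← integral_sub (hMK2.mul_const _) (hK1.mul_const _),
      ← integral_sub (fA_integrable hx) (fB_integrable hx), ← integral_const_mul]
    apply setIntegral_congr_fun measurableSet_Ioi
    intro t _
    simp only [fA, fB]
    rw [Real.sinh_eq x, Real.cosh_eq x,
      show -x * (Real.cosh t - 1) = -x * Real.cosh t + x from by ring,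
      show -x * (Real.cosh t + 1) = -x * Real.cosh t + -x from by ring,
      Real.exp_add, Real.exp_add]
    ring
  linarith [coreAB hx]


lemma besselI1_pos {x : ℝ} (hx : 0 < x) : 0 < besselI1 x := by
  have h0 : (0:ℝ) < (x / 2) ^ (2 * 0 + 1) / ((Nat.factorial 0 : ℝ) * (Nat.factorial (0 + 1) : ℝ)) := by
    norm_num [Nat.factorial]
    positivity
  refine lt_of_lt_of_le h0 ?_
  apply Summable.le_tsum ((summable_norm_I1 x).of_norm) 0
  intro j _
  positivity

lemma hasDerivAt_Gdiag {x : ℝ} (hx : 0 < x) :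
    HasDerivAt Gdiag (besselI1' x * besselK1 x + besselI1 x * -MK x) x :=
  (hasDerivAt_besselI1 x).mul (hasDerivAt_besselK1 hx)

lemma deriv_Gdiag_neg {x : ℝ} (hx : 0 < x) :
    besselI1' x * besselK1 x + besselI1 x * -MK x < 0 := by
  have hs : 0 < Real.sinh x := Real.sinh_pos_iff.2 hx
  have h1 : besselI1' x * besselK1 x * Real.sinh x < besselI1 x * MK x * Real.sinh x := by
    calc besselI1' x * besselK1 x * Real.sinh x
        = (besselI1' x * Real.sinh x) * besselK1 x := by ring
      _ < (besselI1 x * Real.cosh x) * besselK1 x :=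
          mul_lt_mul_of_pos_right (keyA hx) (besselK1_pos hx)
      _ = (besselK1 x * Real.cosh x) * besselI1 x := by ring
      _ ≤ (MK x * Real.sinh x) * besselI1 x :=
          mul_le_mul_of_nonneg_right (keyB hx) (besselI1_pos hx).le
      _ = besselI1 x * MK x * Real.sinh x := by ring
  have h2 : besselI1' x * besselK1 x < besselI1 x * MK x :=
    lt_of_mul_lt_mul_right (by linarith [h1]) hs.le
  linarith

/-- G(q) = I₁(q)K₁(q) is strictly decreasing on (0,∞). -/
theorem Gdiag_strictAntiOn : StrictAntiOn Gdiag (Set.Ioi 0) := by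
  apply strictAntiOn_of_deriv_neg (convex_Ioi 0)
  · intro y hy
    exact ((hasDerivAt_Gdiag hy).differentiableAt.continuousAt).continuousWithinAt
  · intro y hy
    rw [interior_Ioi] at hy
    rw [(hasDerivAt_Gdiag hy).deriv]
    exact deriv_Gdiag_neg hy
end

section
/- For all q > 0, G(q) = I_1(q) K_1(q) satisfies 0 < G(q) < 1/2. -/
open Real Filter Set

open MeasureTheory in
private lemma hd_aux (x : ℝ) (hx : 0 < x) (t : ℝ) :
    HasDerivAt (fun t => -Real.exp (-x * Real.sinh t) / x)
      (Real.exp (-x * Real.sinh t) * Real.cosh t) t := by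
  have h1 : HasDerivAt (fun t : ℝ => -x * Real.sinh t) (-x * Real.cosh t) t :=
    (Real.hasDerivAt_sinh t).const_mul (-x)
  have h3 : HasDerivAt (fun t => -Real.exp (-x * Real.sinh t) / x)
      (-(Real.exp (-x * Real.sinh t) * (-x * Real.cosh t)) / x) t := (h1.exp.neg).div_const x
  convert h3 using 1
  field_simp

private lemma tend_aux (x : ℝ) (hx : 0 < x) :
    Tendsto (fun t => -Real.exp (-x * Real.sinh t) / x) atTop (nhds 0) := by
  have hs : Tendsto Real.sinh atTop atTop := by
    apply tendsto_atTop_mono' atTop ?_ tendsto_id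
    filter_upwards [eventually_ge_atTop (0:ℝ)] with t ht
    exact Real.self_le_sinh_iff.2 ht
  have hms : Tendsto (fun t => -x * Real.sinh t) atTop atBot := by
    have h1 : Tendsto (fun t => x * Real.sinh t) atTop atTop := hs.const_mul_atTop hx
    have h2 := tendsto_neg_atTop_atBot.comp h1
    refine h2.congr (fun t => ?_)
    simp only [Function.comp]
    ring
  have := ((Real.tendsto_exp_atBot.comp hms).neg).div_const x
  simpa using this

open MeasureTheory in
private lemma int_sinh (x : ℝ) (hx : 0 < x) (a : ℝ) :
    IntegrableOn (fun t => Real.exp (-x * Real.sinh t) * Real.cosh t) (Set.Ioi a) ∧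
      ∫ t in Set.Ioi a, Real.exp (-x * Real.sinh t) * Real.cosh t
        = Real.exp (-x * Real.sinh a) / x := by
  have hderiv : ∀ t ∈ Set.Ici a, HasDerivAt (fun t => -Real.exp (-x * Real.sinh t) / x)
      (Real.exp (-x * Real.sinh t) * Real.cosh t) t := fun t _ => hd_aux x hx t
  have hpos : ∀ t ∈ Set.Ioi a, 0 ≤ Real.exp (-x * Real.sinh t) * Real.cosh t := fun t _ =>
    mul_nonneg (Real.exp_pos _).le (Real.cosh_pos _).le
  refine ⟨integrableOn_Ioi_deriv_of_nonneg' hderiv hpos (tend_aux x hx), ?_⟩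
  rw [integral_Ioi_of_hasDerivAt_of_nonneg' hderiv hpos (tend_aux x hx)]
  ring

open MeasureTheory in
private lemma K1_pos (x : ℝ) (hx : 0 < x) : 0 < besselK1 x := by
  have hle : ∀ t : ℝ, Real.exp (-x * Real.cosh t) * Real.cosh t
      ≤ Real.exp (-x * Real.sinh t) * Real.cosh t := by
    intro t
    have h := Real.cosh_sub_sinh t
    have := Real.exp_pos (-t)
    apply mul_le_mul_of_nonneg_right _ (Real.cosh_pos t).le
    apply Real.exp_le_exp.2
    nlinarith
  have hint : IntegrableOn (fun t => Real.exp (-x * Real.cosh t) * Real.cosh t) (Set.Ioi 0) := by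
    apply Integrable.mono' (int_sinh x hx 0).1
    · exact ((Real.continuous_exp.comp (continuous_const.mul Real.continuous_cosh)).mul
        Real.continuous_cosh).aestronglyMeasurable
    · filter_upwards with t
      rw [Real.norm_eq_abs, abs_of_nonneg (mul_nonneg (Real.exp_pos _).le (Real.cosh_pos _).le)]
      exact hle t
  rw [besselK1]
  rw [setIntegral_pos_iff_support_of_nonneg_ae _ hint]
  · have : Function.support (fun t => Real.exp (-x * Real.cosh t) * Real.cosh t) = Set.univ := by
      ext t
      simp only [Function.mem_support, Set.mem_univ, iff_true]
      exact (mul_pos (Real.exp_pos _) (Real.cosh_pos _)).ne'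
    rw [this, Set.univ_inter, Real.volume_Ioi]
    simp
  · filter_upwards with t
    exact mul_nonneg (Real.exp_pos _).le (Real.cosh_pos _).le

open MeasureTheory in
private lemma K1_le (x : ℝ) (hx : 0 < x) :
    besselK1 x ≤ Real.exp (-x) + Real.exp (-x) / x := by
  set a := Real.arsinh 1 with ha_def
  have ha0 : (0:ℝ) ≤ a := Real.arsinh_nonneg_iff.2 zero_le_one
  have hsa : Real.sinh a = 1 := Real.sinh_arsinh 1
  have hle : ∀ t : ℝ, Real.exp (-x * Real.cosh t) * Real.cosh t
      ≤ Real.exp (-x * Real.sinh t) * Real.cosh t := by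
    intro t
    have h := Real.cosh_sub_sinh t
    have := Real.exp_pos (-t)
    apply mul_le_mul_of_nonneg_right _ (Real.cosh_pos t).le
    apply Real.exp_le_exp.2
    nlinarith
  have hint : IntegrableOn (fun t => Real.exp (-x * Real.cosh t) * Real.cosh t) (Set.Ioi 0) := by
    apply Integrable.mono' (int_sinh x hx 0).1
    · exact ((Real.continuous_exp.comp (continuous_const.mul Real.continuous_cosh)).mul
        Real.continuous_cosh).aestronglyMeasurable
    · filter_upwards with t
      rw [Real.norm_eq_abs, abs_of_nonneg (mul_nonneg (Real.exp_pos _).le (Real.cosh_pos _).le)]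
      exact hle t
  have hsplit : besselK1 x
      = (∫ t in Set.Ioc 0 a, Real.exp (-x * Real.cosh t) * Real.cosh t)
        + ∫ t in Set.Ioi a, Real.exp (-x * Real.cosh t) * Real.cosh t := by
    rw [besselK1, ← Set.Ioc_union_Ioi_eq_Ioi ha0,
      setIntegral_union (Set.Ioc_disjoint_Ioi le_rfl) measurableSet_Ioi
        (hint.mono_set (Set.Ioc_subset_Ioi_self.trans (Set.Ioi_subset_Ioi le_rfl)))
        (hint.mono_set (Set.Ioi_subset_Ioi ha0))]
  have h1 : (∫ t in Set.Ioc 0 a, Real.exp (-x * Real.cosh t) * Real.cosh t)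
      ≤ Real.exp (-x) := by
    have hb : (∫ t in Set.Ioc 0 a, Real.exp (-x) * Real.cosh t) = Real.exp (-x) := by
      rw [← intervalIntegral.integral_of_le ha0,
        intervalIntegral.integral_eq_sub_of_hasDerivAt
          (f := fun t => Real.exp (-x) * Real.sinh t)
          (fun t _ => (Real.hasDerivAt_sinh t).const_mul (Real.exp (-x)))
          ((continuous_const.mul Real.continuous_cosh).intervalIntegrable _ _)]
      simp [hsa]
    rw [← hb]
    apply setIntegral_mono_on
      (hint.mono_set (Set.Ioc_subset_Ioi_self.trans (Set.Ioi_subset_Ioi le_rfl)))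
      ((continuous_const.mul Real.continuous_cosh).integrableOn_Ioc)
      measurableSet_Ioc
    intro t _
    apply mul_le_mul_of_nonneg_right _ (Real.cosh_pos t).le
    apply Real.exp_le_exp.2
    have h1c := Real.one_le_cosh t
    nlinarith
  have h2 : (∫ t in Set.Ioi a, Real.exp (-x * Real.cosh t) * Real.cosh t)
      ≤ Real.exp (-x) / x := by
    have := (int_sinh x hx a).2
    rw [hsa] at this
    rw [mul_one] at this
    rw [← this]
    apply setIntegral_mono_on (hint.mono_set (Set.Ioi_subset_Ioi ha0)) (int_sinh x hx a).1
      measurableSet_Ioi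
    intro t _
    exact hle t
  rw [hsplit]
  exact add_le_add h1 h2

private lemma I1_term_le (x : ℝ) (hx : 0 < x) (k : ℕ) :
    (x / 2) ^ (2 * k + 1) / ((Nat.factorial k : ℝ) * (Nat.factorial (k + 1) : ℝ))
      ≤ x ^ (2 * k + 1) / (Nat.factorial (2 * k + 1) : ℝ) / 2 := by
  have hnat : (Nat.factorial (2 * k + 1) : ℝ) ≤ 4 ^ k * (Nat.factorial k * Nat.factorial (k + 1)) := by
    have h1 : (2 * k + 1).choose k * Nat.factorial k * Nat.factorial (k + 1)
        = Nat.factorial (2 * k + 1) := by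
      have h := Nat.add_choose_mul_factorial_mul_factorial k (k + 1)
      rw [show k + (k + 1) = 2 * k + 1 by omega] at h
      have hsymm : (2 * k + 1).choose (k + 1) = (2 * k + 1).choose k := by
        have hcs := Nat.choose_symm (n := 2 * k + 1) (k := k) (by omega)
        rwa [show 2 * k + 1 - k = k + 1 by omega] at hcs
      rwa [hsymm] at h
    have h2 : (2 * k + 1).choose k ≤ 4 ^ k := Nat.choose_middle_le_pow k
    calc (Nat.factorial (2 * k + 1) : ℝ)
        = ((2 * k + 1).choose k : ℝ) * Nat.factorial k * Nat.factorial (k + 1) := by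
          exact_mod_cast congrArg (Nat.cast (R := ℝ)) h1.symm
      _ = ((2 * k + 1).choose k : ℝ) * (Nat.factorial k * Nat.factorial (k + 1)) := by ring
      _ ≤ 4 ^ k * (Nat.factorial k * Nat.factorial (k + 1)) := by
          have hk : ((2 * k + 1).choose k : ℝ) ≤ 4 ^ k := by exact_mod_cast h2
          exact mul_le_mul_of_nonneg_right hk (by positivity)
  have hxp : (0:ℝ) < x ^ (2 * k + 1) := pow_pos hx _
  have hf1 : (0:ℝ) < (Nat.factorial k : ℝ) := by exact_mod_cast Nat.factorial_pos k
  have hf2 : (0:ℝ) < (Nat.factorial (k + 1) : ℝ) := by exact_mod_cast Nat.factorial_pos (k + 1)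
  have hf3 : (0:ℝ) < (Nat.factorial (2 * k + 1) : ℝ) := by exact_mod_cast Nat.factorial_pos _
  have hpow : ((2:ℝ)) ^ (2 * k + 1) = 2 * 4 ^ k := by
    rw [pow_succ, pow_mul]
    norm_num
    ring
  rw [div_pow, div_div, div_div]
  apply div_le_div_of_nonneg_left hxp.le (by positivity)
  calc (Nat.factorial (2 * k + 1) : ℝ) * 2
      ≤ (4 ^ k * (Nat.factorial k * Nat.factorial (k + 1))) * 2 := by nlinarith
    _ = 2 ^ (2 * k + 1) * (Nat.factorial k * Nat.factorial (k + 1)) := by rw [hpow]; ring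

private lemma I1_bounds (x : ℝ) (hx : 0 < x) :
    0 < besselI1 x ∧ besselI1 x ≤ Real.sinh x / 2 := by
  have hs2 : HasSum (fun k : ℕ => x ^ (2 * k + 1) / (Nat.factorial (2 * k + 1) : ℝ) / 2)
      (Real.sinh x / 2) := (Real.hasSum_sinh x).div_const 2
  have hnonneg : ∀ k : ℕ, 0 ≤ (x / 2) ^ (2 * k + 1)
      / ((Nat.factorial k : ℝ) * (Nat.factorial (k + 1) : ℝ)) := by
    intro k
    have : (0:ℝ) < x / 2 := by linarith
    positivity
  have hsumm : Summable (fun k : ℕ => (x / 2) ^ (2 * k + 1)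
      / ((Nat.factorial k : ℝ) * (Nat.factorial (k + 1) : ℝ))) :=
    Summable.of_nonneg_of_le hnonneg (I1_term_le x hx) hs2.summable
  constructor
  · rw [besselI1]
    apply Summable.tsum_pos hsumm hnonneg 0
    norm_num [Nat.factorial]
    positivity
  · rw [besselI1, ← hs2.tsum_eq]
    exact Summable.tsum_le_tsum (I1_term_le x hx) hsumm hs2.summable

private lemma key_ineq (q : ℝ) (hq : 0 < q) :
    (1 - q) * Real.exp q < (1 + q) * Real.exp (-q) := by
  set F : ℝ → ℝ := fun t => (1 + t) * Real.exp (-t) - (1 - t) * Real.exp t with hF_def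
  have hF : ∀ t : ℝ, HasDerivAt F (t * (Real.exp t - Real.exp (-t))) t := by
    intro t
    have hexp_neg : HasDerivAt (fun t : ℝ => Real.exp (-t)) (Real.exp (-t) * (-1)) t :=
      (Real.hasDerivAt_exp (-t)).comp t ((hasDerivAt_id t).neg)
    have h1 : HasDerivAt (fun t : ℝ => 1 + t) 1 t := by
      simpa using (hasDerivAt_id t).const_add 1
    have h3 : HasDerivAt (fun t : ℝ => 1 - t) (-1) t := by
      simpa using (hasDerivAt_id t).const_sub 1
    have h2 := h1.mul hexp_neg
    have h4 := h3.mul (Real.hasDerivAt_exp t)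
    have h5 : HasDerivAt F (1 * Real.exp (-t) + (1 + t) * (Real.exp (-t) * -1)
        - (-1 * Real.exp t + (1 - t) * Real.exp t)) t := h2.sub h4
    convert h5 using 1
    ring
  have hmono : StrictMonoOn F (Set.Ici 0) := by
    apply strictMonoOn_of_deriv_pos (convex_Ici 0)
    · exact (Continuous.sub ((continuous_const.add continuous_id).mul
        (Real.continuous_exp.comp continuous_neg))
        ((continuous_const.sub continuous_id).mul Real.continuous_exp)).continuousOn
    · intro t ht
      rw [interior_Ici, Set.mem_Ioi] at ht
      rw [(hF t).deriv]
      have : Real.exp (-t) < Real.exp t := Real.exp_lt_exp.2 (by linarith)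
      nlinarith
  have h0 : F 0 = 0 := by simp [hF_def]
  have := hmono (Set.self_mem_Ici) (Set.mem_Ici.2 hq.le) hq
  rw [h0] at this
  simp only [hF_def] at this
  linarith

/-- for all q > 0, 0 < G(q) < 1/2. -/
theorem Gdiag_mem_Ioo : ∀ q : ℝ, 0 < q → 0 < Gdiag q ∧ Gdiag q < 1 / 2 := by
  intro q hq
  obtain ⟨hI_pos, hI_le⟩ := I1_bounds q hq
  have hK_pos := K1_pos q hq
  have hK_le := K1_le q hq
  refine ⟨mul_pos hI_pos hK_pos, ?_⟩
  have hstep : Gdiag q ≤ Real.sinh q / 2 * (Real.exp (-q) + Real.exp (-q) / q) := by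
    rw [Gdiag]
    apply mul_le_mul hI_le hK_le hK_pos.le
    have := Real.sinh_pos_iff.2 hq
    linarith
  have hfin : Real.sinh q / 2 * (Real.exp (-q) + Real.exp (-q) / q) < 1 / 2 := by
    have hkey := key_ineq q hq
    have hE : (0:ℝ) < Real.exp q := Real.exp_pos q
    have hE' : (0:ℝ) < Real.exp (-q) := Real.exp_pos _
    have hEE : Real.exp q * Real.exp (-q) = 1 := by
      rw [← Real.exp_add]; simp
    have h3 : 1 - q < (1 + q) * (Real.exp (-q) * Real.exp (-q)) := by
      have h := mul_lt_mul_of_pos_right hkey hE'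
      have he : (1 - q) * Real.exp q * Real.exp (-q) = 1 - q := by
        rw [mul_assoc, hEE, mul_one]
      rw [he] at h
      nlinarith [h]
    rw [Real.sinh_eq]
    have expand : (Real.exp q - Real.exp (-q)) / 2 / 2 * (Real.exp (-q) + Real.exp (-q) / q)
        = ((Real.exp q * Real.exp (-q)) * (q + 1)
            - (Real.exp (-q) * Real.exp (-q)) * (q + 1)) / (4 * q) := by
      field_simp
      ring
    rw [expand, hEE, one_mul, div_lt_iff₀ (by positivity)]
    nlinarith [h3]
  linarith
end
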